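/- Let G be a connected graph, c ≥ 1, k ≥ 0, such that G admits a (k,c)-embedding into the line, and let H be an R-minor of G for some R ≥ c. Then there exists a feedback vertex set X of H with |X| ≤ k, namely the set of net points whose Voronoi clusters intersect the outlier set. -/

import Mathlib

open SimpleGraph

/-- Inclusion homomorphism between induced subgraphs on nested sets. -/
def SimpleGraph.homOfLeSet {V : Type*} (G : SimpleGraph V) {s t : Set V} (h : s ⊆ t) :
    G.induce s →g G.induce t := ⟨fun z => ⟨z.1, h z.2⟩, fun ha => ha⟩

/-- Inclusion homomorphism from an induced subgraph to the ambient graph. -/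
def SimpleGraph.homOfSet {V : Type*} (G : SimpleGraph V) (s : Set V) :
    G.induce s →g G := ⟨Subtype.val, fun ha => ha⟩

/-- Discrete intermediate value theorem along a walk: if a walk has a vertex with
value below the threshold and one above, and no vertex exactly at the threshold,
then some edge crosses the threshold. -/
lemma exists_cross_edge {α : Type*} {Γ : SimpleGraph α} (g : α → ℝ) (θ : ℝ) :
    ∀ {a b : α} (s : Γ.Walk a b), (∀ z ∈ s.support, g z ≠ θ) →
      (∃ x ∈ s.support, g x < θ) → (∃ y ∈ s.support, θ < g y) →
      ∃ p ∈ s.support, ∃ q ∈ s.support, Γ.Adj p q ∧ g p < θ ∧ θ < g q := by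
  intro a b s
  induction s with
  | nil =>
    intro hne hlo hhi
    obtain ⟨x, hx, hxlt⟩ := hlo; obtain ⟨y, hy, hylt⟩ := hhi
    simp only [Walk.support_nil, List.mem_singleton] at hx hy
    subst hx; subst hy; linarith
  | @cons a a' b h r ih =>
    intro hne hlo hhi
    have hsup : (Walk.cons h r).support = a :: r.support := Walk.support_cons _ _
    by_cases hl : ∃ x ∈ r.support, g x < θ
    · by_cases hh : ∃ y ∈ r.support, θ < g y
      · obtain ⟨p, hp, q, hq, hpq⟩ :=
          ih (fun z hz => hne z (by rw [hsup]; exact List.mem_cons_of_mem _ hz)) hl hh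
        exact ⟨p, by rw [hsup]; exact List.mem_cons_of_mem _ hp,
          q, by rw [hsup]; exact List.mem_cons_of_mem _ hq, hpq⟩
      · push_neg at hh
        have hall : ∀ z ∈ r.support, g z < θ := fun z hz =>
          lt_of_le_of_ne (hh z hz) (hne z (by rw [hsup]; exact List.mem_cons_of_mem _ hz))
        obtain ⟨y, hy, hylt⟩ := hhi
        rw [hsup] at hy
        rcases List.mem_cons.mp hy with rfl | hy'
        · refine ⟨a', ?_, y, ?_, h.symm, hall a' r.start_mem_support, hylt⟩
          · rw [hsup]; exact List.mem_cons_of_mem _ r.start_mem_support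
          · rw [hsup]; exact List.mem_cons_self
        · exact absurd hylt (not_lt.mpr (le_of_lt (hall y hy')))
    · push_neg at hl
      have hall : ∀ z ∈ r.support, θ < g z := fun z hz =>
        lt_of_le_of_ne (hl z hz) (Ne.symm (hne z (by rw [hsup]; exact List.mem_cons_of_mem _ hz)))
      obtain ⟨x, hx, hxlt⟩ := hlo
      rw [hsup] at hx
      rcases List.mem_cons.mp hx with rfl | hx'
      · refine ⟨x, ?_, a', ?_, h, hxlt, hall a' r.start_mem_support⟩
        · rw [hsup]; exact List.mem_cons_self
        · rw [hsup]; exact List.mem_cons_of_mem _ r.start_mem_support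
      · exact absurd hxlt (not_lt.mpr (le_of_lt (hall x hx')))

section FVS

variable {V : Type*} [Fintype V] {G : SimpleGraph V} (hG : G.Connected)
  {Y : Set V} {c : ℝ} (hc : 1 ≤ c) {f : {v : V // v ∉ Y} → ℝ}
  (hnc : ∀ x y : {v : V // v ∉ Y},
      (G.induce {v : V | v ∉ Y}).Reachable x y →
        ((G.induce {v : V | v ∉ Y}).dist x y : ℝ) ≤ |f x - f y|)
  (hexp : ∀ x y : {v : V // v ∉ Y},
      (G.induce {v : V | v ∉ Y}).Reachable x y →
        |f x - f y| ≤ c * (G.induce {v : V | v ∉ Y}).dist x y)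
  {R : ℕ} (hcR : c ≤ (R : ℝ))
  {N : Set V} {center : V → V}
  (hsep : ∀ u ∈ N, ∀ v ∈ N, u ≠ v → R < G.dist u v)
  (hcen : ∀ v : V, center v ∈ N)
  (hfix : ∀ y ∈ N, center y = y)
  (hnear : ∀ v : V, ∀ y ∈ N, G.dist v (center v) ≤ G.dist v y)
  (hconn : ∀ y ∈ N, (G.induce {v : V | center v = y}).Connected)

include hG hnc hcR hsep hcen hnear in
/-- Core lemma: a vertex of a foreign cluster cannot be within `c/2` of the
image of a net point. -/
lemma no_close (v : V) (hvN : v ∈ N) (hvY : v ∉ Y)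
    (z : {v : V // v ∉ Y}) (hz : center ↑z ≠ v)
    (hreach : (G.induce {v : V | v ∉ Y}).Reachable z ⟨v, hvY⟩)
    (hclose : |f z - f ⟨v, hvY⟩| ≤ c / 2) : False := by
  have h1 : ((G.induce {v : V | v ∉ Y}).dist z ⟨v, hvY⟩ : ℝ) ≤ c / 2 :=
    le_trans (hnc z ⟨v, hvY⟩ hreach) hclose
  have h2 : G.dist ↑z v ≤ (G.induce {v : V | v ∉ Y}).dist z ⟨v, hvY⟩ := by
    obtain ⟨p, hp⟩ := hreach.exists_walk_length_eq_dist
    calc G.dist ↑z v ≤ (p.map (SimpleGraph.homOfSet G _)).length := SimpleGraph.dist_le _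
      _ = p.length := Walk.length_map _ _
      _ = _ := hp
  have h2' : (G.dist ↑z v : ℝ) ≤ c / 2 := le_trans (Nat.cast_le.mpr h2) h1
  have h3 : G.dist (center ↑z) v ≤ G.dist (center ↑z) ↑z + G.dist ↑z v := hG.dist_triangle
  have h4 : G.dist (center ↑z) ↑z ≤ G.dist ↑z v := by
    rw [SimpleGraph.dist_comm]; exact hnear ↑z v hvN
  have h5 : R < G.dist (center ↑z) v := hsep _ (hcen ↑z) v hvN hz
  have h6 : (R : ℝ) < G.dist (center ↑z) v := by exact_mod_cast h5
  have h7 : (G.dist (center ↑z) v : ℝ) ≤ (G.dist (center ↑z) ↑z : ℝ) + (G.dist ↑z v : ℝ) := by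
    exact_mod_cast h3
  have h8 : (G.dist (center ↑z) ↑z : ℝ) ≤ (G.dist ↑z v : ℝ) := by exact_mod_cast h4
  linarith

include hG hc hnc hexp hcR hsep hcen hfix hnear in
/-- An edge of `G ∖ Y` between vertices of foreign clusters cannot cross the
image of a net point. -/
lemma no_cross_step (v : V) (hvN : v ∈ N) (hvY : v ∉ Y)
    (x x' : {v : V // v ∉ Y}) (hadj : (G.induce {v : V | v ∉ Y}).Adj x x')
    (hx : center ↑x ≠ v) (hx' : center ↑x' ≠ v)
    (hreach : (G.induce {v : V | v ∉ Y}).Reachable x ⟨v, hvY⟩)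
    (hlt : f x < f ⟨v, hvY⟩) : f x' < f ⟨v, hvY⟩ := by
  have hreach' : (G.induce {v : V | v ∉ Y}).Reachable x' ⟨v, hvY⟩ :=
    (hadj.symm.reachable).trans hreach
  rcases lt_trichotomy (f x') (f ⟨v, hvY⟩) with h | h | h
  · exact h
  · exfalso
    have h0 : ((G.induce {v : V | v ∉ Y}).dist x' ⟨v, hvY⟩ : ℝ) ≤ 0 := by
      have := hnc x' ⟨v, hvY⟩ hreach'
      rw [h, sub_self, abs_zero] at this
      exact this
    have hd0 : (G.induce {v : V | v ∉ Y}).dist x' ⟨v, hvY⟩ = 0 := by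
      have := Nat.cast_nonneg (α := ℝ) ((G.induce {v : V | v ∉ Y}).dist x' ⟨v, hvY⟩)
      exact_mod_cast le_antisymm h0 this
    have hxv : x' = ⟨v, hvY⟩ := hreach'.dist_eq_zero_iff.mp hd0
    apply hx'
    rw [hxv]
    exact hfix v hvN
  · exfalso
    have hd1 : (G.induce {v : V | v ∉ Y}).dist x x' ≤ 1 := by
      have := SimpleGraph.dist_le (Walk.cons hadj Walk.nil)
      simpa using this
    have hsum : |f x - f x'| ≤ c := by
      calc |f x - f x'| ≤ c * (G.induce {v : V | v ∉ Y}).dist x x' := hexp x x' hadj.reachable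
        _ ≤ c * 1 := by
            apply mul_le_mul_of_nonneg_left _ (by linarith)
            exact_mod_cast hd1
        _ = c := mul_one c
    have hgap : f x' - f x ≤ c := by
      calc f x' - f x ≤ |f x' - f x| := le_abs_self _
        _ = |f x - f x'| := abs_sub_comm _ _
        _ ≤ c := hsum
    by_cases hmid : f ⟨v, hvY⟩ - f x ≤ c / 2
    · refine no_close hG hnc hcR hsep hcen hnear v hvN hvY x hx hreach ?_
      rw [abs_of_nonpos (by linarith)]
      linarith
    · refine no_close hG hnc hcR hsep hcen hnear v hvN hvY x' hx' hreach' ?_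
      rw [abs_of_nonneg (by linarith)]
      linarith

include hG hc hnc hexp hcR hsep hcen hfix hnear in
/-- A walk of `G ∖ Y` avoiding the cluster of a net point `v` stays on one side
of the image of `v`. -/
lemma no_cross_walk (v : V) (hvN : v ∈ N) (hvY : v ∉ Y) :
    ∀ {x y : {v : V // v ∉ Y}} (W : (G.induce {v : V | v ∉ Y}).Walk x y),
      (∀ z ∈ W.support, center ↑z ≠ v) →
      (G.induce {v : V | v ∉ Y}).Reachable x ⟨v, hvY⟩ →
      f x < f ⟨v, hvY⟩ → f y < f ⟨v, hvY⟩ := by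
  intro x y W
  induction W with
  | nil => intro _ _ h; exact h
  | @cons x u y h r ih =>
    intro hsup hreach hlt
    have hxc : center ↑x ≠ v := hsup _ ((Walk.cons h r).start_mem_support)
    have huc : center ↑u ≠ v := hsup _ (by
      rw [Walk.support_cons]; exact List.mem_cons_of_mem _ r.start_mem_support)
    have hlt1 : f u < f ⟨v, hvY⟩ :=
      no_cross_step hG hc hnc hexp hcR hsep hcen hfix hnear v hvN hvY x u h hxc huc hreach hlt
    exact ih (fun z hz => hsup z (by rw [Walk.support_cons]; exact List.mem_cons_of_mem _ hz))
      ((h.symm.reachable).trans hreach) hlt1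

include hG hc hnc hexp hcR hsep hcen hfix hnear hconn in
/-- An edge of the Voronoi minor cannot jump over a third reachable net point. -/
lemma no_jump (uV wV tV : {v : V // v ∉ Y})
    (huN : (↑uV : V) ∈ N) (hwN : (↑wV : V) ∈ N) (htN : (↑tV : V) ∈ N)
    (huY : ∀ z, center z = ↑uV → z ∉ Y) (hwY : ∀ z, center z = ↑wV → z ∉ Y)
    (htu : (↑tV : V) ≠ ↑uV) (htw : (↑tV : V) ≠ ↑wV)
    (a b : V) (hab : G.Adj a b) (hca : center a = ↑uV) (hcb : center b = ↑wV)
    (hreach : (G.induce {v : V | v ∉ Y}).Reachable uV tV)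
    (h1 : f uV < f tV) (h2 : f tV < f wV) : False := by
  have haY : a ∉ Y := huY a hca
  have hbY : b ∉ Y := hwY b hcb
  obtain ⟨p1⟩ := (hconn ↑uV huN).preconnected ⟨↑uV, hfix ↑uV huN⟩ ⟨a, hca⟩
  obtain ⟨p2⟩ := (hconn ↑wV hwN).preconnected ⟨b, hcb⟩ ⟨↑wV, hfix ↑wV hwN⟩
  let ιu : G.induce {z : V | center z = ↑uV} →g G.induce {v : V | v ∉ Y} :=
    ⟨fun z => ⟨↑z, huY ↑z z.2⟩, fun hadj => hadj⟩
  let ιw : G.induce {z : V | center z = ↑wV} →g G.induce {v : V | v ∉ Y} :=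
    ⟨fun z => ⟨↑z, hwY ↑z z.2⟩, fun hadj => hadj⟩
  have hedge : (G.induce {v : V | v ∉ Y}).Adj ⟨a, haY⟩ ⟨b, hbY⟩ := hab
  let W : (G.induce {v : V | v ∉ Y}).Walk uV wV :=
    (p1.map ιu).append (Walk.cons hedge (p2.map ιw))
  have hWsup : ∀ z ∈ W.support, center ↑z ≠ ↑tV := by
    intro z hz
    have hz2 : center ↑z = ↑uV ∨ center ↑z = ↑wV := by
      rcases (Walk.mem_support_append_iff _ _).mp hz with h | h
      · left
        rw [Walk.support_map] at h
        obtain ⟨z', _, rfl⟩ := List.mem_map.mp h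
        exact z'.2
      · rw [Walk.support_cons] at h
        rcases List.mem_cons.mp h with rfl | h
        · left; exact hca
        · right
          rw [Walk.support_map] at h
          obtain ⟨z', _, rfl⟩ := List.mem_map.mp h
          exact z'.2
    intro heq
    rcases hz2 with h | h
    · exact htu (heq.symm.trans h)
    · exact htw (heq.symm.trans h)
  have := no_cross_walk hG hc hnc hexp hcR hsep hcen hfix hnear ↑tV htN tV.2 W hWsup hreach h1
  exact lt_asymm h2 this

include hnc in
lemma f_inj (x y : {v : V // v ∉ Y})
    (hreach : (G.induce {v : V | v ∉ Y}).Reachable x y) (hfe : f x = f y) : x = y := by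
  have h0 := hnc x y hreach
  rw [hfe, sub_self, abs_zero] at h0
  have hd0 : (G.induce {v : V | v ∉ Y}).dist x y = 0 := by
    have := Nat.cast_nonneg (α := ℝ) ((G.induce {v : V | v ∉ Y}).dist x y)
    exact_mod_cast le_antisymm h0 this
  exact hreach.dist_eq_zero_iff.mp hd0

end FVS

/-- The `R`-minor of `G` induced by a Voronoi partition. -/
def voronoiMinor {V : Type*} (G : SimpleGraph V) (N : Set V) (center : V → V) :
    SimpleGraph N where
  Adj u v := u ≠ v ∧ ∃ a b : V, G.Adj a b ∧ center a = ↑u ∧ center b = ↑v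
  symm := by
    constructor
    rintro u v ⟨h, a, b, hab, ha, hb⟩
    exact ⟨h.symm, b, a, hab.symm, hb, ha⟩
  loopless := by constructor; rintro u ⟨h, -⟩; exact h rfl

/-- Suppose a connected graph `G` admits a `(k,c)`-embedding into
the line, witnessed by an outlier set `Y` (`|Y| ≤ k`) and a non-contracting
embedding of `G \ Y` with expansion at most `c`. Let `H` be an `R`-minor of `G`
with `R ≥ c`. Then the set `X` of net points whose Voronoi clusters intersect `Y`
is a feedback vertex set of `H` with `|X| ≤ k`; in particular a feedback vertex
set of size at most `k` exists. -/
theorem minor_has_small_feedback_vertex_set {V : Type*} [Fintype V]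
    (G : SimpleGraph V) (hG : G.Connected) (c : ℝ) (hc : 1 ≤ c)
    (k : ℕ) (Y : Set V) (hYcard : Y.ncard ≤ k)
    (f : {v : V // v ∉ Y} → ℝ)
    (hnc : ∀ x y : {v : V // v ∉ Y},
      (G.induce {v : V | v ∉ Y}).Reachable x y →
        ((G.induce {v : V | v ∉ Y}).dist x y : ℝ) ≤ |f x - f y|)
    (hexp : ∀ x y : {v : V // v ∉ Y},
      (G.induce {v : V | v ∉ Y}).Reachable x y →
        |f x - f y| ≤ c * (G.induce {v : V | v ∉ Y}).dist x y)
    (R : ℕ) (hcR : c ≤ R)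
    (N : Set V) (center : V → V)
    (hsep : ∀ u ∈ N, ∀ v ∈ N, u ≠ v → R < G.dist u v)
    (hcov : ∀ v : V, ∃ y ∈ N, G.dist v y ≤ R)
    (hcen : ∀ v : V, center v ∈ N)
    (hfix : ∀ y ∈ N, center y = y)
    (hnear : ∀ v : V, ∀ y ∈ N, G.dist v (center v) ≤ G.dist v y)
    (hrad : ∀ v : V, G.dist v (center v) ≤ R)
    (hconn : ∀ y ∈ N, (G.induce {v : V | center v = y}).Connected) :
    ∃ X : Set N, X.ncard ≤ k ∧
      X = {w : N | ∃ v ∈ Y, center v = (w : V)} ∧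
      ((voronoiMinor G N center).induce {w : N | w ∉ X}).IsAcyclic := by
  classical
  refine ⟨{w : N | ∃ v ∈ Y, center v = (w : V)}, ?_, rfl, ?_⟩
  · -- cardinality bound
    have hYfin : Y.Finite := Y.toFinite
    have hle := Set.ncard_le_ncard_of_injOn
      (fun w : N => if h : ∃ v ∈ Y, center v = (w : V) then h.choose else ↑w)
      (s := {w : N | ∃ v ∈ Y, center v = (w : V)}) ?_ ?_ hYfin
    · exact le_trans hle hYcard
    · intro w hw
      have hw' : ∃ v ∈ Y, center v = (w : V) := hw
      show (if h : ∃ v ∈ Y, center v = (w : V) then h.choose else ↑w) ∈ Y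
      rw [dif_pos hw']
      exact hw'.choose_spec.1
    · intro w1 h1 w2 h2 heq
      have h1' : ∃ v ∈ Y, center v = (w1 : V) := h1
      have h2' : ∃ v ∈ Y, center v = (w2 : V) := h2
      have heq' : (if h : ∃ v ∈ Y, center v = (w1 : V) then h.choose else ↑w1) =
          (if h : ∃ v ∈ Y, center v = (w2 : V) then h.choose else ↑w2) := heq
      rw [dif_pos h1', dif_pos h2'] at heq'
      have e1 : center (h1'.choose) = (w1 : V) := h1'.choose_spec.2
      have e2 : center (h2'.choose) = (w2 : V) := h2'.choose_spec.2
      apply Subtype.ext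
      rw [← e1, heq', e2]
  · -- acyclicity
    set X : Set N := {w : N | ∃ v ∈ Y, center v = (w : V)} with hX
    intro v0 q0 hq0
    have notY : ∀ w : {w : N // w ∈ {w : N | w ∉ X}}, (w.1.1 : V) ∉ Y := by
      intro w hw
      exact w.2 ⟨w.1.1, hw, hfix w.1.1 w.1.2⟩
    set lift : {w : N // w ∈ {w : N | w ∉ X}} → {v : V // v ∉ Y} :=
      fun w => ⟨w.1.1, notY w⟩ with hlift
    set g : {w : N // w ∈ {w : N | w ∉ X}} → ℝ := fun w => f (lift w) with hg
    have cluY : ∀ w : {w : N // w ∈ {w : N | w ∉ X}}, ∀ z, center z = (w.1.1 : V) → z ∉ Y := by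
      intro w z hz hzY
      exact w.2 ⟨z, hzY, hz⟩
    have hcR' : c ≤ (R : ℝ) := hcR
    -- adjacency in the minor implies reachability of lifts in G ∖ Y
    have adj_reach : ∀ x y : {w : N // w ∈ {w : N | w ∉ X}},
        (voronoiMinor G N center).Adj ↑x ↑y →
        (G.induce {v : V | v ∉ Y}).Reachable (lift x) (lift y) := by
      intro x y hadj
      obtain ⟨hne, a, b, hab, hca, hcb⟩ := hadj
      have haY : a ∉ Y := cluY x a hca
      have hbY : b ∉ Y := cluY y b hcb
      have r1 : (G.induce {v : V | v ∉ Y}).Reachable (lift x) ⟨a, haY⟩ := by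
        have h0 := (hconn x.1.1 x.1.2).preconnected ⟨x.1.1, hfix x.1.1 x.1.2⟩ ⟨a, hca⟩
        let ι : G.induce {z : V | center z = x.1.1} →g G.induce {v : V | v ∉ Y} :=
          ⟨fun z => ⟨z.1, cluY x z.1 z.2⟩, fun h => h⟩
        exact h0.map ι
      have r2 : (G.induce {v : V | v ∉ Y}).Reachable ⟨b, hbY⟩ (lift y) := by
        have h0 := (hconn y.1.1 y.1.2).preconnected ⟨b, hcb⟩ ⟨y.1.1, hfix y.1.1 y.1.2⟩
        let ι : G.induce {z : V | center z = y.1.1} →g G.induce {v : V | v ∉ Y} :=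
          ⟨fun z => ⟨z.1, cluY y z.1 z.2⟩, fun h => h⟩
        exact h0.map ι
      have hedge : (G.induce {v : V | v ∉ Y}).Adj ⟨a, haY⟩ ⟨b, hbY⟩ := hab
      exact r1.trans (hedge.reachable.trans r2)
    -- reachability of lifts for vertices on the cycle
    have key : ∀ {x y : {w : N // w ∈ {w : N | w ∉ X}}},
        ((voronoiMinor G N center).induce {w : N | w ∉ X}).Reachable x y →
        (G.induce {v : V | v ∉ Y}).Reachable (lift x) (lift y) := by
      intro x y h
      obtain ⟨w⟩ := h
      induction w with
      | nil => exact Reachable.refl _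
      | cons h r ih => exact (adj_reach _ _ h).trans ih
    have supp_reach : ∀ x ∈ q0.support, ∀ y ∈ q0.support,
        (G.induce {v : V | v ∉ Y}).Reachable (lift x) (lift y) := by
      intro x hx y hy
      have hrx := (q0.takeUntil x hx).reachable
      have hry := (q0.takeUntil y hy).reachable
      exact key (hrx.symm.trans hry)
    have ginj : ∀ x ∈ q0.support, ∀ y ∈ q0.support, g x = g y → x = y := by
      intro x hx y hy hge
      have h1 := f_inj hnc (lift x) (lift y) (supp_reach x hx y hy) hge
      have h2 : (lift x).1 = (lift y).1 := congrArg Subtype.val h1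
      exact Subtype.ext (Subtype.ext h2)
    -- argmin, argmax, and a third vertex
    obtain ⟨M, hM, hMmax⟩ := q0.support.toFinset.exists_max_image g
      ⟨v0, List.mem_toFinset.mpr q0.start_mem_support⟩
    obtain ⟨m, hm, hmmin⟩ := q0.support.toFinset.exists_min_image g
      ⟨v0, List.mem_toFinset.mpr q0.start_mem_support⟩
    rw [List.mem_toFinset] at hM hm
    have hlen := hq0.three_le_length
    have hcard : 3 ≤ q0.support.tail.toFinset.card := by
      rw [List.toFinset_card_of_nodup hq0.support_nodup]
      have : q0.support.tail.length = q0.length := by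
        rw [List.length_tail, Walk.length_support]
        omega
      omega
    have hthird : ∃ t0 ∈ q0.support.tail.toFinset, t0 ≠ m ∧ t0 ≠ M := by
      by_contra hcon
      push_neg at hcon
      have hsub : q0.support.tail.toFinset ⊆ {m, M} := by
        intro z hz
        rcases eq_or_ne z m with rfl | hzm
        · exact Finset.mem_insert_self _ _
        · exact Finset.mem_insert_of_mem (Finset.mem_singleton.mpr (hcon z hz hzm))
      have hc1 := Finset.card_le_card hsub
      have hc2 : ({m, M} : Finset _).card ≤ 2 := Finset.card_insert_le _ _
      omega
    obtain ⟨t0, ht0tail, ht0m, ht0M⟩ := hthird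
    rw [List.mem_toFinset] at ht0tail
    have ht0 : t0 ∈ q0.support := List.mem_of_mem_tail ht0tail
    -- rotate the cycle at t0 and cut off both endpoints
    have hq : (q0.rotate t0 ht0).IsCycle := hq0.rotate ht0
    have hqtail : (q0.rotate t0 ht0).support.tail ~r q0.support.tail := Walk.support_rotate q0 t0 ht0
    obtain ⟨u1, hadj1, r, hqe⟩ := Walk.not_nil_iff.mp hq.not_nil
    have hrsup : r.support = (q0.rotate t0 ht0).support.tail := by
      rw [hqe, Walk.support_cons, List.tail_cons]
    have hrnodup : r.support.Nodup := hrsup ▸ hq.support_nodup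
    have hrlen : 0 < r.length := by
      have h1 : (q0.rotate t0 ht0).length = r.length + 1 := by rw [hqe]; simp
      have h2 : 3 ≤ (q0.rotate t0 ht0).length := hq.three_le_length
      omega
    have hrevnil : ¬ r.reverse.Nil := by
      rw [Walk.not_nil_iff_lt_length, Walk.length_reverse]
      exact hrlen
    obtain ⟨w1, hadj2, s2, hre⟩ := Walk.not_nil_iff.mp hrevnil
    have hrs : r.support = s2.reverse.support ++ [t0] := by
      have hrr : r = (Walk.cons hadj2 s2).reverse := by rw [← hre, Walk.reverse_reverse]
      rw [hrr, Walk.reverse_cons, Walk.support_append]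
      simp
    have ht0s : t0 ∉ s2.reverse.support := by
      have hnd := hrnodup
      rw [hrs] at hnd
      rcases List.nodup_append.mp hnd with ⟨-, -, hdisj⟩
      intro hmem
      exact hdisj t0 hmem t0 (List.mem_singleton_self t0) rfl
    have hv0tail : v0 ∈ q0.support.tail := by
      obtain ⟨u', h', r', he'⟩ := Walk.not_nil_iff.mp hq0.not_nil
      rw [he', Walk.support_cons, List.tail_cons]
      exact r'.end_mem_support
    have hmemtrans : ∀ x ∈ q0.support, x ≠ t0 → x ∈ s2.reverse.support := by
      intro x hx hxt
      have hxtail : x ∈ q0.support.tail := by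
        rcases (Walk.mem_support_iff q0).mp hx with rfl | h
        · exact hv0tail
        · exact h
      have hxq : x ∈ (q0.rotate t0 ht0).support.tail := (hqtail.mem_iff).mpr hxtail
      rw [← hrsup, hrs] at hxq
      rcases List.mem_append.mp hxq with h | h
      · exact h
      · exact absurd (List.mem_singleton.mp h) hxt
    have hsubq : ∀ z ∈ s2.reverse.support, z ∈ q0.support := by
      intro z hz
      have h1 : z ∈ r.support := by rw [hrs]; exact List.mem_append_left _ hz
      rw [hrsup] at h1
      exact List.mem_of_mem_tail ((hqtail.mem_iff).mp h1)
    have hgm : g m < g t0 :=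
      lt_of_le_of_ne (hmmin t0 (List.mem_toFinset.mpr ht0))
        (fun he => ht0m (ginj t0 ht0 m hm he.symm))
    have hgM : g t0 < g M :=
      lt_of_le_of_ne (hMmax t0 (List.mem_toFinset.mpr ht0))
        (fun he => ht0M (ginj t0 ht0 M hM he))
    have hms : m ∈ s2.reverse.support := hmemtrans m hm (fun he => ht0m he.symm)
    have hMs : M ∈ s2.reverse.support := hmemtrans M hM (fun he => ht0M he.symm)
    have hnev : ∀ z ∈ s2.reverse.support, g z ≠ g t0 := by
      intro z hz he
      have : z = t0 := ginj z (hsubq z hz) t0 ht0 he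
      exact ht0s (this ▸ hz)
    obtain ⟨pp, hpp, qq, hqq, hpq, hgp, hgq⟩ :=
      exists_cross_edge g (g t0) s2.reverse hnev ⟨m, hms, hgm⟩ ⟨M, hMs, hgM⟩
    obtain ⟨hne2, a, b, hab, hca, hcb⟩ := hpq
    have htp : (t0.1.1 : V) ≠ pp.1.1 := by
      intro he
      exact ht0s ((Subtype.ext (Subtype.ext he) : t0 = pp) ▸ hpp)
    have htq : (t0.1.1 : V) ≠ qq.1.1 := by
      intro he
      exact ht0s ((Subtype.ext (Subtype.ext he) : t0 = qq) ▸ hqq)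
    exact no_jump hG hc hnc hexp hcR' hsep hcen hfix hnear hconn
      (lift pp) (lift qq) (lift t0) pp.1.2 qq.1.2 t0.1.2
      (cluY pp) (cluY qq) htp htq a b hab hca hcb
      (supp_reach pp (hsubq pp hpp) t0 ht0) hgp hgq
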